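/- Let S_{abc} = ε_{abcd} V^d be a totally antisymmetric spin current on 4-dimensional Minkowski space. Then the tensor H_{ab} = 8π[(S_{ca}{}^d + 2S^d{}_{(ca)})(S_{db}{}^c + 2S^c{}_{(db)}) + (1/2) g_{ab}(S_{cde} + 2S_{e(cd)})(S^{dec} + 2S^{c(de)})] reduces to H_{ab} = −16π(V_a V_b + (1/2) g_{ab} V^c V_c). -/

import Mathlib

open Real

/-- Sign of an integer as a real number. -/
def sgnZ (x : ℤ) : ℝ := if 0 < x then 1 else if x < 0 then -1 else 0

/-- The Levi-Civita permutation symbol on four indices, `lc 0 1 2 3 = 1`. -/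
def lc (a b c d : Fin 4) : ℝ :=
  sgnZ ((b : ℤ) - a) * sgnZ ((c : ℤ) - a) * sgnZ ((d : ℤ) - a) *
    sgnZ ((c : ℤ) - b) * sgnZ ((d : ℤ) - b) * sgnZ ((d : ℤ) - c)

/-- The Minkowski metric `diag(−1,1,1,1)` (equal to its own inverse). -/
def eta4 (a b : Fin 4) : ℝ := if a = b then (if a = 0 then -1 else 1) else 0


lemma fv0 : (0 : Fin 4).val = 0 := rfl
lemma fv1 : (1 : Fin 4).val = 1 := rfl
lemma fv2 : (2 : Fin 4).val = 2 := rfl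
lemma fv3 : (3 : Fin 4).val = 3 := rfl

def Sd (V : Fin 4 → ℝ) (a b c : Fin 4) : ℝ := ∑ d, lc a b c d * V d

lemma mkE0 (h : 0 < 4) : (⟨0, h⟩ : Fin 4) = 0 := rfl
lemma mkE1 (h : 1 < 4) : (⟨1, h⟩ : Fin 4) = 1 := rfl
lemma mkE2 (h : 2 < 4) : (⟨2, h⟩ : Fin 4) = 2 := rfl
lemma mkE3 (h : 3 < 4) : (⟨3, h⟩ : Fin 4) = 3 := rfl

lemma etE00 : eta4 0 0 = (-1 : ℝ) := by norm_num [eta4, Fin.ext_iff, fv0, fv1, fv2, fv3]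
lemma etE01 : eta4 0 1 = (0 : ℝ) := by norm_num [eta4, Fin.ext_iff, fv0, fv1, fv2, fv3]
lemma etE02 : eta4 0 2 = (0 : ℝ) := by norm_num [eta4, Fin.ext_iff, fv0, fv1, fv2, fv3]
lemma etE03 : eta4 0 3 = (0 : ℝ) := by norm_num [eta4, Fin.ext_iff, fv0, fv1, fv2, fv3]
lemma etE10 : eta4 1 0 = (0 : ℝ) := by norm_num [eta4, Fin.ext_iff, fv0, fv1, fv2, fv3]
lemma etE11 : eta4 1 1 = (1 : ℝ) := by norm_num [eta4, Fin.ext_iff, fv0, fv1, fv2, fv3]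
lemma etE12 : eta4 1 2 = (0 : ℝ) := by norm_num [eta4, Fin.ext_iff, fv0, fv1, fv2, fv3]
lemma etE13 : eta4 1 3 = (0 : ℝ) := by norm_num [eta4, Fin.ext_iff, fv0, fv1, fv2, fv3]
lemma etE20 : eta4 2 0 = (0 : ℝ) := by norm_num [eta4, Fin.ext_iff, fv0, fv1, fv2, fv3]
lemma etE21 : eta4 2 1 = (0 : ℝ) := by norm_num [eta4, Fin.ext_iff, fv0, fv1, fv2, fv3]
lemma etE22 : eta4 2 2 = (1 : ℝ) := by norm_num [eta4, Fin.ext_iff, fv0, fv1, fv2, fv3]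
lemma etE23 : eta4 2 3 = (0 : ℝ) := by norm_num [eta4, Fin.ext_iff, fv0, fv1, fv2, fv3]
lemma etE30 : eta4 3 0 = (0 : ℝ) := by norm_num [eta4, Fin.ext_iff, fv0, fv1, fv2, fv3]
lemma etE31 : eta4 3 1 = (0 : ℝ) := by norm_num [eta4, Fin.ext_iff, fv0, fv1, fv2, fv3]
lemma etE32 : eta4 3 2 = (0 : ℝ) := by norm_num [eta4, Fin.ext_iff, fv0, fv1, fv2, fv3]
lemma etE33 : eta4 3 3 = (1 : ℝ) := by norm_num [eta4, Fin.ext_iff, fv0, fv1, fv2, fv3]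

lemma SdE000 (V : Fin 4 → ℝ) : Sd V 0 0 0 = 0 := by
  norm_num [Sd, lc, sgnZ, fv0, fv1, fv2, fv3, Fin.sum_univ_four]
lemma SdE001 (V : Fin 4 → ℝ) : Sd V 0 0 1 = 0 := by
  norm_num [Sd, lc, sgnZ, fv0, fv1, fv2, fv3, Fin.sum_univ_four]
lemma SdE002 (V : Fin 4 → ℝ) : Sd V 0 0 2 = 0 := by
  norm_num [Sd, lc, sgnZ, fv0, fv1, fv2, fv3, Fin.sum_univ_four]
lemma SdE003 (V : Fin 4 → ℝ) : Sd V 0 0 3 = 0 := by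
  norm_num [Sd, lc, sgnZ, fv0, fv1, fv2, fv3, Fin.sum_univ_four]
lemma SdE010 (V : Fin 4 → ℝ) : Sd V 0 1 0 = 0 := by
  norm_num [Sd, lc, sgnZ, fv0, fv1, fv2, fv3, Fin.sum_univ_four]
lemma SdE011 (V : Fin 4 → ℝ) : Sd V 0 1 1 = 0 := by
  norm_num [Sd, lc, sgnZ, fv0, fv1, fv2, fv3, Fin.sum_univ_four]
lemma SdE012 (V : Fin 4 → ℝ) : Sd V 0 1 2 = V 3 := by
  norm_num [Sd, lc, sgnZ, fv0, fv1, fv2, fv3, Fin.sum_univ_four] <;> simp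
lemma SdE013 (V : Fin 4 → ℝ) : Sd V 0 1 3 = -V 2 := by
  norm_num [Sd, lc, sgnZ, fv0, fv1, fv2, fv3, Fin.sum_univ_four] <;> simp
lemma SdE020 (V : Fin 4 → ℝ) : Sd V 0 2 0 = 0 := by
  norm_num [Sd, lc, sgnZ, fv0, fv1, fv2, fv3, Fin.sum_univ_four]
lemma SdE021 (V : Fin 4 → ℝ) : Sd V 0 2 1 = -V 3 := by
  norm_num [Sd, lc, sgnZ, fv0, fv1, fv2, fv3, Fin.sum_univ_four] <;> simp
lemma SdE022 (V : Fin 4 → ℝ) : Sd V 0 2 2 = 0 := by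
  norm_num [Sd, lc, sgnZ, fv0, fv1, fv2, fv3, Fin.sum_univ_four]
lemma SdE023 (V : Fin 4 → ℝ) : Sd V 0 2 3 = V 1 := by
  norm_num [Sd, lc, sgnZ, fv0, fv1, fv2, fv3, Fin.sum_univ_four]
lemma SdE030 (V : Fin 4 → ℝ) : Sd V 0 3 0 = 0 := by
  norm_num [Sd, lc, sgnZ, fv0, fv1, fv2, fv3, Fin.sum_univ_four]
lemma SdE031 (V : Fin 4 → ℝ) : Sd V 0 3 1 = V 2 := by
  norm_num [Sd, lc, sgnZ, fv0, fv1, fv2, fv3, Fin.sum_univ_four] <;> simp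
lemma SdE032 (V : Fin 4 → ℝ) : Sd V 0 3 2 = -V 1 := by
  norm_num [Sd, lc, sgnZ, fv0, fv1, fv2, fv3, Fin.sum_univ_four]
lemma SdE033 (V : Fin 4 → ℝ) : Sd V 0 3 3 = 0 := by
  norm_num [Sd, lc, sgnZ, fv0, fv1, fv2, fv3, Fin.sum_univ_four]
lemma SdE100 (V : Fin 4 → ℝ) : Sd V 1 0 0 = 0 := by
  norm_num [Sd, lc, sgnZ, fv0, fv1, fv2, fv3, Fin.sum_univ_four]
lemma SdE101 (V : Fin 4 → ℝ) : Sd V 1 0 1 = 0 := by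
  norm_num [Sd, lc, sgnZ, fv0, fv1, fv2, fv3, Fin.sum_univ_four]
lemma SdE102 (V : Fin 4 → ℝ) : Sd V 1 0 2 = -V 3 := by
  norm_num [Sd, lc, sgnZ, fv0, fv1, fv2, fv3, Fin.sum_univ_four] <;> simp
lemma SdE103 (V : Fin 4 → ℝ) : Sd V 1 0 3 = V 2 := by
  norm_num [Sd, lc, sgnZ, fv0, fv1, fv2, fv3, Fin.sum_univ_four] <;> simp
lemma SdE110 (V : Fin 4 → ℝ) : Sd V 1 1 0 = 0 := by
  norm_num [Sd, lc, sgnZ, fv0, fv1, fv2, fv3, Fin.sum_univ_four]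
lemma SdE111 (V : Fin 4 → ℝ) : Sd V 1 1 1 = 0 := by
  norm_num [Sd, lc, sgnZ, fv0, fv1, fv2, fv3, Fin.sum_univ_four]
lemma SdE112 (V : Fin 4 → ℝ) : Sd V 1 1 2 = 0 := by
  norm_num [Sd, lc, sgnZ, fv0, fv1, fv2, fv3, Fin.sum_univ_four]
lemma SdE113 (V : Fin 4 → ℝ) : Sd V 1 1 3 = 0 := by
  norm_num [Sd, lc, sgnZ, fv0, fv1, fv2, fv3, Fin.sum_univ_four]
lemma SdE120 (V : Fin 4 → ℝ) : Sd V 1 2 0 = V 3 := by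
  norm_num [Sd, lc, sgnZ, fv0, fv1, fv2, fv3, Fin.sum_univ_four] <;> simp
lemma SdE121 (V : Fin 4 → ℝ) : Sd V 1 2 1 = 0 := by
  norm_num [Sd, lc, sgnZ, fv0, fv1, fv2, fv3, Fin.sum_univ_four]
lemma SdE122 (V : Fin 4 → ℝ) : Sd V 1 2 2 = 0 := by
  norm_num [Sd, lc, sgnZ, fv0, fv1, fv2, fv3, Fin.sum_univ_four]
lemma SdE123 (V : Fin 4 → ℝ) : Sd V 1 2 3 = -V 0 := by
  norm_num [Sd, lc, sgnZ, fv0, fv1, fv2, fv3, Fin.sum_univ_four]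
lemma SdE130 (V : Fin 4 → ℝ) : Sd V 1 3 0 = -V 2 := by
  norm_num [Sd, lc, sgnZ, fv0, fv1, fv2, fv3, Fin.sum_univ_four] <;> simp
lemma SdE131 (V : Fin 4 → ℝ) : Sd V 1 3 1 = 0 := by
  norm_num [Sd, lc, sgnZ, fv0, fv1, fv2, fv3, Fin.sum_univ_four]
lemma SdE132 (V : Fin 4 → ℝ) : Sd V 1 3 2 = V 0 := by
  norm_num [Sd, lc, sgnZ, fv0, fv1, fv2, fv3, Fin.sum_univ_four]
lemma SdE133 (V : Fin 4 → ℝ) : Sd V 1 3 3 = 0 := by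
  norm_num [Sd, lc, sgnZ, fv0, fv1, fv2, fv3, Fin.sum_univ_four]
lemma SdE200 (V : Fin 4 → ℝ) : Sd V 2 0 0 = 0 := by
  norm_num [Sd, lc, sgnZ, fv0, fv1, fv2, fv3, Fin.sum_univ_four]
lemma SdE201 (V : Fin 4 → ℝ) : Sd V 2 0 1 = V 3 := by
  norm_num [Sd, lc, sgnZ, fv0, fv1, fv2, fv3, Fin.sum_univ_four] <;> simp
lemma SdE202 (V : Fin 4 → ℝ) : Sd V 2 0 2 = 0 := by
  norm_num [Sd, lc, sgnZ, fv0, fv1, fv2, fv3, Fin.sum_univ_four]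
lemma SdE203 (V : Fin 4 → ℝ) : Sd V 2 0 3 = -V 1 := by
  norm_num [Sd, lc, sgnZ, fv0, fv1, fv2, fv3, Fin.sum_univ_four]
lemma SdE210 (V : Fin 4 → ℝ) : Sd V 2 1 0 = -V 3 := by
  norm_num [Sd, lc, sgnZ, fv0, fv1, fv2, fv3, Fin.sum_univ_four] <;> simp
lemma SdE211 (V : Fin 4 → ℝ) : Sd V 2 1 1 = 0 := by
  norm_num [Sd, lc, sgnZ, fv0, fv1, fv2, fv3, Fin.sum_univ_four]
lemma SdE212 (V : Fin 4 → ℝ) : Sd V 2 1 2 = 0 := by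
  norm_num [Sd, lc, sgnZ, fv0, fv1, fv2, fv3, Fin.sum_univ_four]
lemma SdE213 (V : Fin 4 → ℝ) : Sd V 2 1 3 = V 0 := by
  norm_num [Sd, lc, sgnZ, fv0, fv1, fv2, fv3, Fin.sum_univ_four]
lemma SdE220 (V : Fin 4 → ℝ) : Sd V 2 2 0 = 0 := by
  norm_num [Sd, lc, sgnZ, fv0, fv1, fv2, fv3, Fin.sum_univ_four]
lemma SdE221 (V : Fin 4 → ℝ) : Sd V 2 2 1 = 0 := by
  norm_num [Sd, lc, sgnZ, fv0, fv1, fv2, fv3, Fin.sum_univ_four]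
lemma SdE222 (V : Fin 4 → ℝ) : Sd V 2 2 2 = 0 := by
  norm_num [Sd, lc, sgnZ, fv0, fv1, fv2, fv3, Fin.sum_univ_four]
lemma SdE223 (V : Fin 4 → ℝ) : Sd V 2 2 3 = 0 := by
  norm_num [Sd, lc, sgnZ, fv0, fv1, fv2, fv3, Fin.sum_univ_four]
lemma SdE230 (V : Fin 4 → ℝ) : Sd V 2 3 0 = V 1 := by
  norm_num [Sd, lc, sgnZ, fv0, fv1, fv2, fv3, Fin.sum_univ_four]
lemma SdE231 (V : Fin 4 → ℝ) : Sd V 2 3 1 = -V 0 := by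
  norm_num [Sd, lc, sgnZ, fv0, fv1, fv2, fv3, Fin.sum_univ_four]
lemma SdE232 (V : Fin 4 → ℝ) : Sd V 2 3 2 = 0 := by
  norm_num [Sd, lc, sgnZ, fv0, fv1, fv2, fv3, Fin.sum_univ_four]
lemma SdE233 (V : Fin 4 → ℝ) : Sd V 2 3 3 = 0 := by
  norm_num [Sd, lc, sgnZ, fv0, fv1, fv2, fv3, Fin.sum_univ_four]
lemma SdE300 (V : Fin 4 → ℝ) : Sd V 3 0 0 = 0 := by
  norm_num [Sd, lc, sgnZ, fv0, fv1, fv2, fv3, Fin.sum_univ_four]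
lemma SdE301 (V : Fin 4 → ℝ) : Sd V 3 0 1 = -V 2 := by
  norm_num [Sd, lc, sgnZ, fv0, fv1, fv2, fv3, Fin.sum_univ_four] <;> simp
lemma SdE302 (V : Fin 4 → ℝ) : Sd V 3 0 2 = V 1 := by
  norm_num [Sd, lc, sgnZ, fv0, fv1, fv2, fv3, Fin.sum_univ_four]
lemma SdE303 (V : Fin 4 → ℝ) : Sd V 3 0 3 = 0 := by
  norm_num [Sd, lc, sgnZ, fv0, fv1, fv2, fv3, Fin.sum_univ_four]
lemma SdE310 (V : Fin 4 → ℝ) : Sd V 3 1 0 = V 2 := by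
  norm_num [Sd, lc, sgnZ, fv0, fv1, fv2, fv3, Fin.sum_univ_four] <;> simp
lemma SdE311 (V : Fin 4 → ℝ) : Sd V 3 1 1 = 0 := by
  norm_num [Sd, lc, sgnZ, fv0, fv1, fv2, fv3, Fin.sum_univ_four]
lemma SdE312 (V : Fin 4 → ℝ) : Sd V 3 1 2 = -V 0 := by
  norm_num [Sd, lc, sgnZ, fv0, fv1, fv2, fv3, Fin.sum_univ_four]
lemma SdE313 (V : Fin 4 → ℝ) : Sd V 3 1 3 = 0 := by
  norm_num [Sd, lc, sgnZ, fv0, fv1, fv2, fv3, Fin.sum_univ_four]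
lemma SdE320 (V : Fin 4 → ℝ) : Sd V 3 2 0 = -V 1 := by
  norm_num [Sd, lc, sgnZ, fv0, fv1, fv2, fv3, Fin.sum_univ_four]
lemma SdE321 (V : Fin 4 → ℝ) : Sd V 3 2 1 = V 0 := by
  norm_num [Sd, lc, sgnZ, fv0, fv1, fv2, fv3, Fin.sum_univ_four]
lemma SdE322 (V : Fin 4 → ℝ) : Sd V 3 2 2 = 0 := by
  norm_num [Sd, lc, sgnZ, fv0, fv1, fv2, fv3, Fin.sum_univ_four]
lemma SdE323 (V : Fin 4 → ℝ) : Sd V 3 2 3 = 0 := by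
  norm_num [Sd, lc, sgnZ, fv0, fv1, fv2, fv3, Fin.sum_univ_four]
lemma SdE330 (V : Fin 4 → ℝ) : Sd V 3 3 0 = 0 := by
  norm_num [Sd, lc, sgnZ, fv0, fv1, fv2, fv3, Fin.sum_univ_four]
lemma SdE331 (V : Fin 4 → ℝ) : Sd V 3 3 1 = 0 := by
  norm_num [Sd, lc, sgnZ, fv0, fv1, fv2, fv3, Fin.sum_univ_four]
lemma SdE332 (V : Fin 4 → ℝ) : Sd V 3 3 2 = 0 := by
  norm_num [Sd, lc, sgnZ, fv0, fv1, fv2, fv3, Fin.sum_univ_four]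
lemma SdE333 (V : Fin 4 → ℝ) : Sd V 3 3 3 = 0 := by
  norm_num [Sd, lc, sgnZ, fv0, fv1, fv2, fv3, Fin.sum_univ_four]


set_option maxHeartbeats 0 in
lemma Sd_swap (V : Fin 4 → ℝ) (x y z : Fin 4) : Sd V x y z + Sd V x z y = 0 := by
  fin_cases x <;> fin_cases y <;> fin_cases z <;>
    norm_num [Sd, lc, sgnZ, fv0, fv1, fv2, fv3, Fin.sum_univ_four] <;> simp <;> ring

lemma sumR (f : Fin 4 → ℝ) (z : Fin 4) : (∑ e, f e * eta4 e z) = eta4 z z * f z := by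
  fin_cases z <;> simp [eta4, Fin.sum_univ_four]

lemma sumL (f : Fin 4 → ℝ) (x : Fin 4) : (∑ e, eta4 x e * f e) = eta4 x x * f x := by
  fin_cases x <;> simp [eta4, Fin.sum_univ_four]

set_option maxHeartbeats 2000000 in
lemma Sup_eq (V : Fin 4 → ℝ) (x y z : Fin 4) :
    (∑ e, ∑ f, ∑ h, eta4 x e * eta4 y f * eta4 z h * Sd V e f h) =
      eta4 x x * eta4 y y * eta4 z z * Sd V x y z := by
  fin_cases x <;> fin_cases y <;> fin_cases z <;>
    simp [eta4, Fin.sum_univ_four] <;> ring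

set_option maxHeartbeats 1000000 in
lemma key1 (V : Fin 4 → ℝ) (a b : Fin 4) :
    (∑ c, ∑ d, (eta4 d d * Sd V c a d) * (eta4 c c * Sd V d b c)) =
      -2 * (eta4 a a * V a) * (eta4 b b * V b) +
        2 * eta4 a b * ∑ c, eta4 c c * V c * V c := by
  fin_cases a <;> fin_cases b <;>
    simp only [mkE0, mkE1, mkE2, mkE3, Fin.sum_univ_four, SdE000, SdE001, SdE002, SdE003, SdE010, SdE011, SdE012, SdE013, SdE020, SdE021, SdE022, SdE023, SdE030, SdE031, SdE032, SdE033, SdE100, SdE101, SdE102, SdE103, SdE110, SdE111, SdE112, SdE113, SdE120, SdE121, SdE122, SdE123, SdE130, SdE131, SdE132, SdE133, SdE200, SdE201, SdE202, SdE203, SdE210, SdE211, SdE212, SdE213, SdE220, SdE221, SdE222, SdE223, SdE230, SdE231, SdE232, SdE233, SdE300, SdE301, SdE302, SdE303, SdE310, SdE311, SdE312, SdE313, SdE320, SdE321, SdE322, SdE323, SdE330, SdE331, SdE332, SdE333, etE00, etE01, etE02, etE03, etE10, etE11, etE12, etE13, etE20, etE21, etE22, etE23, etE30, etE31, etE32,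 etE33] <;> ring

set_option maxHeartbeats 1000000 in
lemma key2 (V : Fin 4 → ℝ) :
    (∑ c, ∑ d, ∑ e, Sd V c d e * (eta4 d d * eta4 e e * eta4 c c * Sd V d e c)) =
      -6 * ∑ c, eta4 c c * V c * V c := by
  simp only [mkE0, mkE1, mkE2, mkE3, Fin.sum_univ_four, SdE000, SdE001, SdE002, SdE003, SdE010, SdE011, SdE012, SdE013, SdE020, SdE021, SdE022, SdE023, SdE030, SdE031, SdE032, SdE033, SdE100, SdE101, SdE102, SdE103, SdE110, SdE111, SdE112, SdE113, SdE120, SdE121, SdE122, SdE123, SdE130, SdE131, SdE132, SdE133, SdE200, SdE201, SdE202, SdE203, SdE210, SdE211, SdE212, SdE213, SdE220, SdE221, SdE222, SdE223, SdE230, SdE231, SdE232, SdE233, SdE300, SdE301, SdE302, SdE303, SdE310, SdE311, SdE312, SdE313, SdE320, SdE321, SdE322, SdE323, SdE330, SdE331, SdE332, SdE333, etE00, etE01, etE02, etE03, etE10, etE11, etE12, etE13, etE20, etE21, etE22, etE23, etE30, etE31, etE32, etE33]; ring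

/-- For a totally antisymmetric spin current `S_{abc} = ε_{abcd} V^d` on Minkowski
space, the tensor `H_{ab}` of Einstein-Cartan theory reduces to
`H_{ab} = −16π (V_a V_b + (1/2) g_{ab} V^c V_c)`. -/
theorem H_totally_antisymmetric (V : Fin 4 → ℝ) :
    let S : Fin 4 → Fin 4 → Fin 4 → ℝ := fun a b c => ∑ d, lc a b c d * V d
    -- third index raised
    let S3 : Fin 4 → Fin 4 → Fin 4 → ℝ := fun a b c => ∑ e, S a b e * eta4 e c
    -- first index raised
    let S1 : Fin 4 → Fin 4 → Fin 4 → ℝ := fun a b c => ∑ e, eta4 a e * S e b c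
    -- all indices raised
    let Sup : Fin 4 → Fin 4 → Fin 4 → ℝ := fun a b c =>
      ∑ e, ∑ f, ∑ h, eta4 a e * eta4 b f * eta4 c h * S e f h
    let Vlow : Fin 4 → ℝ := fun a => ∑ b, eta4 a b * V b
    let H : Fin 4 → Fin 4 → ℝ := fun a b =>
      8 * π * ((∑ c, ∑ d, (S3 c a d + (S1 d c a + S1 d a c)) *
          (S3 d b c + (S1 c d b + S1 c b d))) +
        (1 / 2) * eta4 a b * ∑ c, ∑ d, ∑ e,
          (S c d e + (S e c d + S e d c)) * (Sup d e c + (Sup c d e + Sup c e d)))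
    ∀ a b, H a b = -16 * π * (Vlow a * Vlow b + (1 / 2) * eta4 a b * ∑ c, Vlow c * V c) := by
  intro S S3 S1 Sup Vlow H a b
  have hS : ∀ x y z, S x y z = Sd V x y z := fun _ _ _ => rfl
  have h33 : ∀ x y z, S3 x y z = eta4 z z * Sd V x y z := by
    intro x y z; simp only [S3, hS]; exact sumR _ z
  have h13 : ∀ x y z, S1 x y z = eta4 x x * Sd V x y z := by
    intro x y z; simp only [S1, hS]; exact sumL _ x
  have hSup : ∀ x y z, Sup x y z = eta4 x x * eta4 y y * eta4 z z * Sd V x y z := by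
    intro x y z; simp only [Sup, hS]; exact Sup_eq V x y z
  have hV : ∀ x, Vlow x = eta4 x x * V x := by
    intro x; simp only [Vlow]; exact sumL _ x
  have hp1 : ∀ x y z : Fin 4, eta4 x x * Sd V x y z + eta4 x x * Sd V x z y = 0 := by
    intro x y z; linear_combination eta4 x x * Sd_swap V x y z
  have hp3 : ∀ x y z : Fin 4,
      eta4 x x * eta4 y y * eta4 z z * Sd V x y z +
        eta4 x x * eta4 z z * eta4 y y * Sd V x z y = 0 := by
    intro x y z; linear_combination (eta4 x x * eta4 y y * eta4 z z) * Sd_swap V x y z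
  simp only [H, h33, h13, hSup, hV, hS, Sd_swap, hp1, hp3, add_zero]
  linear_combination (8 * π) * key1 V a b + (4 * π * eta4 a b) * key2 V
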